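/- The twisted group algebra k[G,α(·,·|f)^{-1}] structure: for fixed f in a group G and a normalized 3-cocycle α on G, the restriction of the 2-cochain (g,h) ↦ α(g,h|f)^{-1} to the centralizer C_G(f) is a 2-cocycle on C_G(f) with values in k*. -/

import Mathlib

/-- `α(g,h|f) = α(g,h,f)⁻¹ · α(g, hfh⁻¹, h) · α((gh)f(gh)⁻¹, g, h)⁻¹`. -/
def aux2 {G : Type*} [Group G] {k : Type*} [Field k]
    (α : G → G → G → kˣ) (g h f : G) : kˣ :=
  (α g h f)⁻¹ * α g (h * f * h⁻¹) h * (α ((g * h) * f * (g * h)⁻¹) g h)⁻¹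

/-- for a normalized 3-cocycle `α` on `G` valued in `k*` and `f ∈ G`,
the 2-cochain `σ(g,h) = α(g,h|f)⁻¹` restricted to the centralizer `C_G(f)` is a
2-cocycle: `σ(g,h)σ(gh,l) = σ(h,l)σ(g,hl)`. -/
theorem stmt4 {G : Type*} [Group G] {k : Type*} [Field k] (α : G → G → G → kˣ)
    (hcoc : ∀ f g h l : G,
      α g h l * α f (g * h) l * α f g h = α (f * g) h l * α f g (h * l))
    (hnorm : ∀ f g h : G, f = 1 ∨ g = 1 ∨ h = 1 → α f g h = 1)
    (f : G) (g h l : G)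
    (hg : g ∈ Subgroup.centralizer {f}) (hh : h ∈ Subgroup.centralizer {f})
    (hl : l ∈ Subgroup.centralizer {f}) :
    (aux2 α g h f)⁻¹ * (aux2 α (g * h) l f)⁻¹
      = (aux2 α h l f)⁻¹ * (aux2 α g (h * l) f)⁻¹ := by
  -- commuting facts
  have hfg : f * g = g * f := Subgroup.mem_centralizer_iff.mp hg f rfl
  have hfh : f * h = h * f := Subgroup.mem_centralizer_iff.mp hh f rfl
  have hfl : f * l = l * f := Subgroup.mem_centralizer_iff.mp hl f rfl
  have conj : ∀ x ∈ Subgroup.centralizer {f}, x * f * x⁻¹ = f := by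
    intro x hx
    rw [← Subgroup.mem_centralizer_iff.mp hx f rfl, mul_inv_cancel_right]
  have hgh : g * h ∈ Subgroup.centralizer {f} := mul_mem hg hh
  have hhl : h * l ∈ Subgroup.centralizer {f} := mul_mem hh hl
  have ch := conj h hh
  have cl := conj l hl
  have cgh := conj (g * h) hgh
  have chl := conj (h * l) hhl
  have cghl := conj ((g * h) * l) (mul_mem hgh hl)
  have cg_hl := conj (g * (h * l)) (mul_mem hg hhl)
  -- cocycle instances
  have e1 := hcoc f g h l
  have e2 := hcoc g f h l
  have e3 := hcoc g h f l
  have e4 := hcoc g h l f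
  rw [hfg] at e1
  rw [← hfh, hfl] at e3
  -- combined identity
  have E : (α g h l * α f (g * h) l * α f g h) * (α h f l * α g (f * h) l * α g h f)
        * ((α (g * f) h l * α g f (h * l)) * (α (g * h) l f * α g h (l * f)))
      = (α (g * f) h l * α f g (h * l)) * (α (g * h) f l * α g h (l * f))
        * ((α f h l * α g (f * h) l * α g f h) * (α h l f * α g (h * l) f * α g h l)) := by
    rw [e1, e2, e3, e4]
  simp only [aux2, ch, cl, cgh, chl, cghl, cg_hl]
  apply mul_right_cancel
    (b := (α (g * f) h l * α f g (h * l)) * (α (g * h) f l * α g h (l * f))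
        * ((α f h l * α g (f * h) l * α g f h) * (α h l f * α g (h * l) f * α g h l)))
  conv_rhs => rw [← E]
  refine Units.ext ?_
  simp only [Units.val_mul, Units.val_inv_eq_inv_val]
  field_simp
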